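/- Let t ≥ 1 be an integer and n ≥ 2 be a squarefree integer. Then L_t(n) = - Σ_{d | n} d · [ (Σ_{e | n, e ≤ d} μ(e))^t - (Σ_{e | n, e < d} μ(e))^t ]. -/
import Mathlib


open Finset MeasureTheory

/-- Truncated convolution of the Möbius function: `M(n,z) = ∑_{d ∣ n, d ≤ z} μ(d)`. -/
noncomputable def Mfun (n : ℕ) (z : ℝ) : ℤ :=
  ∑ d ∈ n.divisors.filter (fun d : ℕ => (d : ℝ) ≤ z), ArithmeticFunction.moebius d

/-- `L_t(n) = ∫_1^n M(n,z)^t dz`. -/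
noncomputable def Lfun (t n : ℕ) : ℝ :=
  ∫ z in (1:ℝ)..(n:ℝ), ((Mfun n z : ℤ) : ℝ) ^ t

private lemma step_integrable (d c a b : ℝ) :
    IntervalIntegrable (fun z => if d ≤ z then c else 0) volume a b := by
  have h : (fun z => if d ≤ z then c else 0) = fun z => c • (if d ≤ z then (1:ℝ) else 0) := by
    funext z; by_cases h : d ≤ z <;> simp [h]
  rw [h]
  refine IntervalIntegrable.smul ?_ c
  refine Monotone.intervalIntegrable ?_
  intro x y hxy
  by_cases hx : d ≤ x <;> by_cases hy : d ≤ y <;> simp [hx, hy]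
  · exact absurd (hx.trans hxy) hy

private lemma step_integral (d c : ℝ) (b : ℝ) (h1 : 1 ≤ d) (h2 : d ≤ b) :
    ∫ z in (1:ℝ)..b, (if d ≤ z then c else 0) = c * (b - d) := by
  rw [← intervalIntegral.integral_add_adjacent_intervals (step_integrable d c 1 d)
    (step_integrable d c d b)]
  have e1 : (∫ z in (1:ℝ)..d, (if d ≤ z then c else 0)) = 0 := by
    have h0 : ∀ᵐ x : ℝ, x ≠ d := by
      rw [MeasureTheory.ae_iff]
      convert Real.volume_singleton (a := d) using 2
      ext x; simp
    have : ∀ᵐ x : ℝ, x ∈ Set.uIoc (1:ℝ) d → (if d ≤ x then c else 0) = 0 := by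
      filter_upwards [h0] with x hx hxI
      rw [Set.uIoc_of_le h1] at hxI
      have : ¬ d ≤ x := fun h => hx (le_antisymm hxI.2 h)
      simp [this]
    rw [intervalIntegral.integral_congr_ae this]
    simp
  have e2 : (∫ z in d..b, (if d ≤ z then c else 0)) = c * (b - d) := by
    have : Set.EqOn (fun z => if d ≤ z then c else 0) (fun _ => c) (Set.uIcc d b) := by
      intro x hx
      rw [Set.uIcc_of_le h2] at hx
      simp [hx.1]
    rw [intervalIntegral.integral_congr this, intervalIntegral.integral_const, smul_eq_mul,
      mul_comm]
  rw [e1, e2, zero_add]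

private lemma tele (t n : ℕ) (ht : 1 ≤ t) : ∀ k : ℕ,
    ∑ d ∈ n.divisors.filter (· ≤ k),
      ((∑ e ∈ n.divisors.filter (· ≤ d), ((ArithmeticFunction.moebius e : ℤ) : ℝ)) ^ t -
        (∑ e ∈ n.divisors.filter (· < d), ((ArithmeticFunction.moebius e : ℤ) : ℝ)) ^ t)
    = (∑ e ∈ n.divisors.filter (· ≤ k), ((ArithmeticFunction.moebius e : ℤ) : ℝ)) ^ t := by
  intro k
  induction k using Nat.strong_induction_on with
  | _ k ih =>
    by_cases hA : (n.divisors.filter (· ≤ k)).Nonempty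
    · set m := (n.divisors.filter (· ≤ k)).max' hA with hm
      have hmem := (n.divisors.filter (· ≤ k)).max'_mem hA
      rw [mem_filter] at hmem
      have hm1 : 1 ≤ m := Nat.pos_of_mem_divisors hmem.1
      have hkm : n.divisors.filter (· ≤ k) = n.divisors.filter (· ≤ m) := by
        ext e
        simp only [mem_filter, and_congr_right_iff]
        intro he
        constructor
        · intro h
          have hmem2 : e ∈ n.divisors.filter (· ≤ k) := mem_filter.mpr ⟨he, h⟩
          exact le_max' _ e hmem2
        · intro h; exact h.trans hmem.2
      have hlt : n.divisors.filter (· < m) = n.divisors.filter (· ≤ m - 1) := by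
        ext e
        simp only [mem_filter, and_congr_right_iff]
        intro he
        omega
      have hins : n.divisors.filter (· ≤ m) = insert m (n.divisors.filter (· < m)) := by
        ext e
        simp only [mem_filter, mem_insert]
        constructor
        · rintro ⟨he, h⟩
          rcases eq_or_lt_of_le h with h | h
          · exact Or.inl h
          · exact Or.inr ⟨he, h⟩
        · rintro (rfl | ⟨he, h⟩)
          · exact ⟨hmem.1, le_refl _⟩
          · exact ⟨he, le_of_lt h⟩
      have hnotmem : m ∉ n.divisors.filter (· < m) := by
        simp [mem_filter]
      rw [hkm, hins, sum_insert hnotmem, ← hins]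
      rw [show n.divisors.filter (· < m) = n.divisors.filter (· ≤ m - 1) from hlt] at *
      rw [ih (m - 1) (by omega)]
      ring
    · rw [not_nonempty_iff_eq_empty] at hA
      rw [hA]
      simp [zero_pow (by omega : t ≠ 0)]

private lemma pointwise (t n : ℕ) (ht : 1 ≤ t) (z : ℝ) :
    ((Mfun n z : ℤ) : ℝ) ^ t = ∑ d ∈ n.divisors,
      (if (d : ℝ) ≤ z then
        ((∑ e ∈ n.divisors.filter (· ≤ d), ((ArithmeticFunction.moebius e : ℤ) : ℝ)) ^ t -
          (∑ e ∈ n.divisors.filter (· < d), ((ArithmeticFunction.moebius e : ℤ) : ℝ)) ^ t)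
       else 0) := by
  by_cases hz : 0 ≤ z
  · have hfilt : n.divisors.filter (fun d : ℕ => (d : ℝ) ≤ z)
        = n.divisors.filter (· ≤ ⌊z⌋₊) := by
      ext e
      simp only [mem_filter, and_congr_right_iff]
      intro _
      exact (Nat.le_floor_iff hz).symm
    have hM : ((Mfun n z : ℤ) : ℝ)
        = ∑ e ∈ n.divisors.filter (· ≤ ⌊z⌋₊), ((ArithmeticFunction.moebius e : ℤ) : ℝ) := by
      rw [Mfun, hfilt]
      push_cast
      rfl
    rw [hM, ← tele t n ht ⌊z⌋₊, sum_filter]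
    refine Finset.sum_congr rfl fun d hd => ?_
    congr 1
    simp only [eq_iff_iff]
    exact (Nat.le_floor_iff hz).trans Iff.rfl |>.symm |>.symm
  · push_neg at hz
    have hfilt : n.divisors.filter (fun d : ℕ => (d : ℝ) ≤ z) = ∅ := by
      rw [filter_eq_empty_iff]
      intro d hd
      have : (1 : ℝ) ≤ (d : ℝ) := by
        exact_mod_cast Nat.pos_of_mem_divisors hd
      push_neg
      linarith
    have hM : Mfun n z = 0 := by rw [Mfun, hfilt, sum_empty]
    rw [hM]
    have : ∀ d ∈ n.divisors, (if (d : ℝ) ≤ z then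
        ((∑ e ∈ n.divisors.filter (· ≤ d), ((ArithmeticFunction.moebius e : ℤ) : ℝ)) ^ t -
          (∑ e ∈ n.divisors.filter (· < d), ((ArithmeticFunction.moebius e : ℤ) : ℝ)) ^ t)
       else 0) = 0 := by
      intro d hd
      have h1 : (1 : ℝ) ≤ (d : ℝ) := by exact_mod_cast Nat.pos_of_mem_divisors hd
      have : ¬ ((d : ℝ) ≤ z) := by linarith
      simp [this]
    rw [Finset.sum_congr rfl this]
    simp [zero_pow (by omega : t ≠ 0)]

theorem stmt9 (t n : ℕ) (ht : 1 ≤ t) (hn : 2 ≤ n) (hsf : Squarefree n) :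
    Lfun t n = -∑ d ∈ n.divisors, (d : ℝ) *
      ((∑ e ∈ n.divisors.filter (· ≤ d), ((ArithmeticFunction.moebius e : ℤ) : ℝ)) ^ t -
        (∑ e ∈ n.divisors.filter (· < d), ((ArithmeticFunction.moebius e : ℤ) : ℝ)) ^ t) := by
  set c : ℕ → ℝ := fun d =>
      ((∑ e ∈ n.divisors.filter (· ≤ d), ((ArithmeticFunction.moebius e : ℤ) : ℝ)) ^ t -
        (∑ e ∈ n.divisors.filter (· < d), ((ArithmeticFunction.moebius e : ℤ) : ℝ)) ^ t)
    with hc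
  have hn0 : n ≠ 0 := by omega
  -- rewrite the integrand
  have hLfun : Lfun t n
      = ∑ d ∈ n.divisors, ∫ z in (1:ℝ)..(n:ℝ), (if (d : ℝ) ≤ z then c d else 0) := by
    rw [Lfun]
    rw [intervalIntegral.integral_congr (g := fun z => ∑ d ∈ n.divisors,
      (if (d : ℝ) ≤ z then c d else 0)) (fun z _ => pointwise t n ht z)]
    exact intervalIntegral.integral_finset_sum fun d _ => step_integrable _ _ _ _
  -- evaluate each integral
  have heval : ∀ d ∈ n.divisors,
      (∫ z in (1:ℝ)..(n:ℝ), (if (d : ℝ) ≤ z then c d else 0)) = c d * ((n : ℝ) - d) := by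
    intro d hd
    have h1 : (1 : ℝ) ≤ (d : ℝ) := by exact_mod_cast Nat.pos_of_mem_divisors hd
    have h2 : (d : ℝ) ≤ (n : ℝ) := by
      exact_mod_cast Nat.le_of_dvd (by omega) (Nat.dvd_of_mem_divisors hd)
    exact step_integral _ _ _ h1 h2
  rw [hLfun, Finset.sum_congr rfl heval]
  -- total telescoped sum is zero
  have hμ : ∑ e ∈ n.divisors, ((ArithmeticFunction.moebius e : ℤ) : ℝ) = 0 := by
    have h1 : ((ArithmeticFunction.moebius * ArithmeticFunction.zeta :
        ArithmeticFunction ℤ)) n = ∑ d ∈ n.divisors, ArithmeticFunction.moebius d :=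
      ArithmeticFunction.coe_mul_zeta_apply
    rw [ArithmeticFunction.moebius_mul_coe_zeta,
      ArithmeticFunction.one_apply_ne (by omega : n ≠ 1)] at h1
    have h2 : ((∑ d ∈ n.divisors, ArithmeticFunction.moebius d : ℤ) : ℝ) = 0 := by
      rw [← h1]; simp
    push_cast at h2
    exact h2
  have hfull : n.divisors.filter (· ≤ n) = n.divisors := by
    apply Finset.filter_true_of_mem
    intro d hd
    exact Nat.le_of_dvd (by omega) (Nat.dvd_of_mem_divisors hd)
  have hsum0 : ∑ d ∈ n.divisors, c d = 0 := by
    have := tele t n ht n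
    rw [hfull] at this
    rw [hc, this, hμ, zero_pow (by omega : t ≠ 0)]
  have : ∑ d ∈ n.divisors, c d * ((n : ℝ) - d)
      = (n : ℝ) * (∑ d ∈ n.divisors, c d) - ∑ d ∈ n.divisors, (d : ℝ) * c d := by
    rw [Finset.mul_sum, ← Finset.sum_sub_distrib]
    exact Finset.sum_congr rfl fun d _ => by ring
  rw [this, hsum0, mul_zero, zero_sub]
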